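/- Let x₀, φ, t₀, ρ be as in the context, let α ∈ Sⁿ, and let r_α be any element of G preserving ℝ^{n+1}×{0} with r_α(α,1) = e₁. If there exists a sequence t_k → ∞ in [t₀,∞) such that ω(g_{t_k} r_α Λ₀) < ρ(t_k), then there exist infinitely many pairs (p,q) ∈ ℤ^{n+1} × ℕ with q ≥ x₀, p/q ∈ Sⁿ, and ‖α − p/q‖ < √(n+1)·φ(q). -/

import Mathlib

open MeasureTheory

/-- The unit Euclidean sphere `Sⁿ` in `ℝ^{n+1}` (the ambient space `Fin (n+1) → ℝ`
carries the supremum norm). -/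
noncomputable def unitSphere (n : ℕ) : Set (Fin (n + 1) → ℝ) :=
  {x | ∑ i, x i ^ 2 = 1}

/-- The rational point `p/q` in `ℝ^{n+1}`. -/
noncomputable def ratPt (n : ℕ) (p : Fin (n + 1) → ℤ) (q : ℕ) : Fin (n + 1) → ℝ :=
  fun i => (p i : ℝ) / (q : ℝ)

/-- The quadratic form `Q(x) = x₁² + ⋯ + x_{n+1}² − x_{n+2}²` on `ℝ^{n+2}`. -/
noncomputable def Qform (n : ℕ) (x : Fin (n + 2) → ℝ) : ℝ :=
  (∑ i : Fin (n + 1), x i.castSucc ^ 2) - x (Fin.last (n + 1)) ^ 2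

/-- `Λ₀ = ℤ^{n+2} ∩ L`, the integer points of the light cone `L = {Q = 0}`. -/
noncomputable def Lambda0 (n : ℕ) : Set (Fin (n + 2) → ℝ) :=
  {v | (∀ i, ∃ m : ℤ, v i = (m : ℝ)) ∧ Qform n v = 0}

/-- Membership in `G = SO(Q)`: determinant one and preservation of `Q`. -/
def isSOQ (n : ℕ) (g : Matrix (Fin (n + 2)) (Fin (n + 2)) ℝ) : Prop :=
  g.det = 1 ∧ ∀ x, Qform n (g.mulVec x) = Qform n x

/-- The one-parameter diagonal flow `g_t`. -/
noncomputable def gFlow (n : ℕ) (t : ℝ) : Matrix (Fin (n + 2)) (Fin (n + 2)) ℝ :=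
  Matrix.of fun i j =>
    if i = 0 ∧ j = 0 then Real.cosh t
    else if i = 0 ∧ j = Fin.last (n + 1) then -Real.sinh t
    else if i = Fin.last (n + 1) ∧ j = 0 then -Real.sinh t
    else if i = Fin.last (n + 1) ∧ j = Fin.last (n + 1) then Real.cosh t
    else if i = j then 1 else 0

/-- The vector `e₁ = (1,0,…,0,1) ∈ L`. -/
noncomputable def eOne (n : ℕ) : Fin (n + 2) → ℝ :=
  fun i => if i = 0 then 1 else if i = Fin.last (n + 1) then 1 else 0

/-- The embedding `α ↦ (α,1)` of `Sⁿ` into the light cone. -/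
noncomputable def embedS (n : ℕ) (α : Fin (n + 1) → ℝ) : Fin (n + 2) → ℝ :=
  Fin.snoc α 1

/-- The vector `(p,q) ∈ ℝ^{n+2}` with first `n+1` coordinates `p` and last coordinate `q`. -/
noncomputable def vecPQ (n : ℕ) (p : Fin (n + 1) → ℤ) (q : ℕ) : Fin (n + 2) → ℝ :=
  Fin.snoc (fun i => (p i : ℝ)) (q : ℝ)

/-- `g` preserves the subspace `ℝ^{n+1} × {0}`. -/
def preservesHyperplane (n : ℕ) (g : Matrix (Fin (n + 2)) (Fin (n + 2)) ℝ) : Prop :=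
  ∀ x : Fin (n + 2) → ℝ, x (Fin.last (n + 1)) = 0 → g.mulVec x (Fin.last (n + 1)) = 0

/-- `ω(Λ)`: the infimum of the (sup) norms of the nonzero vectors of `Λ`. -/
noncomputable def omegaMin (n : ℕ) (Λ : Set (Fin (n + 2) → ℝ)) : ℝ :=
  sInf ((fun v => ‖v‖) '' {v | v ∈ Λ ∧ v ≠ 0})

/-- The lattice `g Λ₀`. -/
noncomputable def latticeOf (n : ℕ) (g : Matrix (Fin (n + 2)) (Fin (n + 2)) ℝ) :
    Set (Fin (n + 2) → ℝ) :=
  (fun v => g.mulVec v) '' Lambda0 n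

lemma zero_ne_last (n : ℕ) : (0 : Fin (n+2)) ≠ Fin.last (n+1) := by
  simp [Fin.ext_iff]

lemma gFlow_mulVec (n : ℕ) (t : ℝ) (w : Fin (n+2) → ℝ) :
    (gFlow n t).mulVec w = fun i =>
      if i = 0 then Real.cosh t * w 0 - Real.sinh t * w (Fin.last (n+1))
      else if i = Fin.last (n+1) then -(Real.sinh t) * w 0 + Real.cosh t * w (Fin.last (n+1))
      else w i := by
  have h0l := zero_ne_last n
  funext i
  simp only [Matrix.mulVec, dotProduct, gFlow, Matrix.of_apply]
  by_cases h0 : i = 0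
  · subst h0
    have : ∀ j : Fin (n+2),
        (if (0:Fin (n+2)) = 0 ∧ j = 0 then Real.cosh t
         else if (0:Fin (n+2)) = 0 ∧ j = Fin.last (n+1) then -Real.sinh t
         else if (0:Fin (n+2)) = Fin.last (n+1) ∧ j = 0 then -Real.sinh t
         else if (0:Fin (n+2)) = Fin.last (n+1) ∧ j = Fin.last (n+1) then Real.cosh t
         else if (0:Fin (n+2)) = j then 1 else 0) * w j
        = (if j = 0 then Real.cosh t * w j else 0)
          + (if j = Fin.last (n+1) then -Real.sinh t * w j else 0) := by
      intro j
      by_cases hj0 : j = 0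
      · subst hj0; simp [h0l, h0l.symm]
      · by_cases hjl : j = Fin.last (n+1)
        · subst hjl; simp [h0l, Ne.symm hj0]
        · simp [h0l, hj0, hjl]
          exact fun h => absurd h.symm hj0
    rw [Finset.sum_congr rfl (fun j _ => this j), Finset.sum_add_distrib,
      Finset.sum_ite_eq' Finset.univ (0 : Fin (n+2)) (fun j => Real.cosh t * w j),
      Finset.sum_ite_eq' Finset.univ (Fin.last (n+1)) (fun j => -Real.sinh t * w j)]
    simp [h0l]; ring
  · by_cases hl : i = Fin.last (n+1)
    · subst hl
      have : ∀ j : Fin (n+2),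
          (if Fin.last (n+1) = 0 ∧ j = 0 then Real.cosh t
           else if Fin.last (n+1) = 0 ∧ j = Fin.last (n+1) then -Real.sinh t
           else if Fin.last (n+1) = Fin.last (n+1) ∧ j = 0 then -Real.sinh t
           else if Fin.last (n+1) = Fin.last (n+1) ∧ j = Fin.last (n+1) then Real.cosh t
           else if Fin.last (n+1) = j then 1 else 0) * w j
          = (if j = 0 then -Real.sinh t * w j else 0)
            + (if j = Fin.last (n+1) then Real.cosh t * w j else 0) := by
        intro j
        by_cases hj0 : j = 0
        · subst hj0; simp [h0l.symm]
        · by_cases hjl : j = Fin.last (n+1)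
          · subst hjl; simp [h0l.symm]
          · simp [h0l.symm, hj0, hjl]
            exact fun h => absurd h.symm hjl
      rw [Finset.sum_congr rfl (fun j _ => this j), Finset.sum_add_distrib,
        Finset.sum_ite_eq' Finset.univ (0 : Fin (n+2)) (fun j => -Real.sinh t * w j),
        Finset.sum_ite_eq' Finset.univ (Fin.last (n+1)) (fun j => Real.cosh t * w j)]
      simp [h0l]
    · have : ∀ j : Fin (n+2),
          (if i = 0 ∧ j = 0 then Real.cosh t
           else if i = 0 ∧ j = Fin.last (n+1) then -Real.sinh t
           else if i = Fin.last (n+1) ∧ j = 0 then -Real.sinh t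
           else if i = Fin.last (n+1) ∧ j = Fin.last (n+1) then Real.cosh t
           else if i = j then 1 else 0) * w j
          = (if j = i then w j else 0) := by
        intro j
        by_cases hji : j = i
        · subst hji; simp [h0, hl]
        · simp [h0, hl, hji]
          exact fun h => absurd h.symm hji
      rw [Finset.sum_congr rfl (fun j _ => this j),
        Finset.sum_ite_eq' Finset.univ i (fun j => w j)]
      simp [h0, hl]


section Aux
variable {n : ℕ} {α : Fin (n+1) → ℝ} {rα : Matrix (Fin (n+2)) (Fin (n+2)) ℝ}

lemma eOne_last : eOne n (Fin.last (n+1)) = 1 := by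
  simp [eOne, (zero_ne_last n).symm]

lemma eOne_castSucc (i : Fin (n+1)) : eOne n i.castSucc = if i = 0 then 1 else 0 := by
  have h1 : i.castSucc ≠ Fin.last (n+1) := Fin.ne_last_of_lt (Fin.castSucc_lt_last i)
  by_cases h : i = 0
  · subst h; simp [eOne]
  · have : i.castSucc ≠ 0 := by
      simpa [Fin.castSucc_eq_zero_iff] using h
    simp [eOne, this, h1, h]

lemma r_last (hrP : preservesHyperplane n rα)
    (hrα : rα.mulVec (embedS n α) = eOne n) (v : Fin (n+2) → ℝ) :
    rα.mulVec v (Fin.last (n+1)) = v (Fin.last (n+1)) := by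
  set c := v (Fin.last (n+1)) with hc
  have hdecomp : rα.mulVec v = rα.mulVec (v - c • embedS n α) + c • eOne n := by
    rw [Matrix.mulVec_sub, Matrix.mulVec_smul, hrα, sub_add_cancel]
  have h0 : (v - c • embedS n α) (Fin.last (n+1)) = 0 := by
    simp [embedS, Fin.snoc_last, hc]
  rw [hdecomp, Pi.add_apply, hrP _ h0, Pi.smul_apply, eOne_last]
  simp

lemma E_eq (hrG : isSOQ n rα) (hrP : preservesHyperplane n rα)
    (hrα : rα.mulVec (embedS n α) = eOne n)
    (pr : Fin (n+1) → ℝ) (q : ℝ) (hsum : ∑ i, pr i ^ 2 = q ^ 2) :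
    ∑ i, (pr i - q * α i) ^ 2 = 2 * q * (q - rα.mulVec (Fin.snoc pr q) 0) := by
  set v : Fin (n+2) → ℝ := Fin.snoc pr q with hv
  set w := rα.mulVec v with hw
  have hQv : Qform n v = 0 := by
    simp [Qform, hv, Fin.snoc_castSucc, Fin.snoc_last, hsum]
  have hwlast : w (Fin.last (n+1)) = q := by
    rw [hw, r_last hrP hrα]; simp [hv, Fin.snoc_last]
  have hQw : Qform n w = 0 := by rw [hw, hrG.2]; exact hQv
  have hsum2 : ∑ i : Fin (n+1), w i.castSucc ^ 2 = q ^ 2 := by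
    unfold Qform at hQw; rw [hwlast] at hQw; linarith
  have hveq : v - q • embedS n α = Fin.snoc (fun i => pr i - q * α i) 0 := by
    funext i
    refine Fin.lastCases ?_ ?_ i
    · simp [hv, embedS, Fin.snoc_last]
    · intro j; simp [hv, embedS, Fin.snoc_castSucc]
  have hQc : Qform n (v - q • embedS n α) = ∑ i, (pr i - q * α i) ^ 2 := by
    rw [hveq]; simp [Qform, Fin.snoc_castSucc, Fin.snoc_last]
  have hWc : rα.mulVec (v - q • embedS n α) = w - q • eOne n := by
    rw [Matrix.mulVec_sub, Matrix.mulVec_smul, hrα, hw]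
  have hQw2 : Qform n (w - q • eOne n) = ∑ i, (pr i - q * α i) ^ 2 := by
    rw [← hWc, hrG.2, hQc]
  have hterm : ∀ i : Fin (n+1), ((w - q • eOne n) i.castSucc) ^ 2
      = w i.castSucc ^ 2 - (if i = 0 then 2 * q * w i.castSucc - q ^ 2 else 0) := by
    intro i
    rw [Pi.sub_apply, Pi.smul_apply, smul_eq_mul, eOne_castSucc]
    by_cases h : i = 0 <;> simp [h] <;> ring
  have hlast0 : (w - q • eOne n) (Fin.last (n+1)) = 0 := by
    simp [hwlast, eOne_last]
  have hexp : Qform n (w - q • eOne n)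
      = q ^ 2 - (2 * q * w 0 - q ^ 2) := by
    unfold Qform
    rw [hlast0, Finset.sum_congr rfl (fun i _ => hterm i), Finset.sum_sub_distrib,
      Finset.sum_ite_eq' Finset.univ (0 : Fin (n+1))
        (fun i => 2 * q * w i.castSucc - q ^ 2), hsum2]
    simp [Fin.castSucc_zero]
  rw [← hQw2, hexp]; ring

lemma u_last (hrP : preservesHyperplane n rα)
    (hrα : rα.mulVec (embedS n α) = eOne n) (pr : Fin (n+1) → ℝ) (q t : ℝ) :
    (gFlow n t * rα).mulVec (Fin.snoc pr q) (Fin.last (n+1))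
      = q * Real.exp (-t) + Real.sinh t * (q - rα.mulVec (Fin.snoc pr q) 0) := by
  set v : Fin (n+2) → ℝ := Fin.snoc pr q with hv
  have hu : (gFlow n t * rα).mulVec v = (gFlow n t).mulVec (rα.mulVec v) :=
    (Matrix.mulVec_mulVec v (gFlow n t) rα).symm
  have hwl : rα.mulVec v (Fin.last (n+1)) = q := by
    rw [r_last hrP hrα]; simp [hv, Fin.snoc_last]
  rw [hu, gFlow_mulVec]
  simp only [(zero_ne_last n).symm, if_neg (Ne.symm (zero_ne_last n)), if_pos rfl, hwl,
    if_true, if_false]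
  linear_combination q * (Real.cosh_sub_sinh t)

lemma u_zero (hrP : preservesHyperplane n rα)
    (hrα : rα.mulVec (embedS n α) = eOne n) (pr : Fin (n+1) → ℝ) (q t : ℝ) :
    (gFlow n t * rα).mulVec (Fin.snoc pr q) 0
      = q * Real.exp (-t) - Real.cosh t * (q - rα.mulVec (Fin.snoc pr q) 0) := by
  set v : Fin (n+2) → ℝ := Fin.snoc pr q with hv
  have hu : (gFlow n t * rα).mulVec v = (gFlow n t).mulVec (rα.mulVec v) :=
    (Matrix.mulVec_mulVec v (gFlow n t) rα).symm
  have hwl : rα.mulVec v (Fin.last (n+1)) = q := by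
    rw [r_last hrP hrα]; simp [hv, Fin.snoc_last]
  rw [hu, gFlow_mulVec]
  simp only [if_pos rfl, hwl, if_true]
  linear_combination q * (Real.cosh_sub_sinh t)

end Aux

section Quant
variable {n : ℕ} {α : Fin (n+1) → ℝ} {rα : Matrix (Fin (n+2)) (Fin (n+2)) ℝ}

lemma sinh_nonneg' {t : ℝ} (ht : 0 ≤ t) : 0 ≤ Real.sinh t := by
  rw [Real.sinh_eq]
  have := Real.exp_le_exp.2 (neg_le_self ht)
  linarith

set_option maxHeartbeats 1600000 in
lemma key_forward (x₀ : ℝ) (hx₀ : 1 ≤ x₀) (φ ψ : ℝ → ℝ)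
    (hφpos : ∀ x ∈ Set.Ici x₀, 0 < φ x)
    (hφanti : StrictAntiOn φ (Set.Ici x₀))
    (hxφ : ∀ x y : ℝ, x₀ ≤ x → x ≤ y → y * φ y ≤ x * φ x)
    (hψmem : ∀ y ∈ Set.Ioc (0 : ℝ) (φ x₀), ψ y ∈ Set.Ici x₀ ∧ φ (ψ y) = y)
    (hrG : isSOQ n rα) (hrP : preservesHyperplane n rα)
    (hrα : rα.mulVec (embedS n α) = eOne n)
    (t : ℝ) (ht0 : 0 ≤ t)
    (htlog : Real.log (2 / (Real.sqrt ((n:ℝ)+1) * φ x₀)) ≤ t)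
    (p : Fin (n+1) → ℤ) (q : ℕ) (hq : 0 < q) (hqx : x₀ ≤ (q:ℝ))
    (hsum : ∑ i, ((p i : ℝ))^2 = (q:ℝ)^2)
    (hnorm : ‖(gFlow n t * rα).mulVec (vecPQ n p q)‖ <
      Real.exp (-t) * ψ (2 / (Real.sqrt ((n:ℝ)+1) * Real.exp t))) :
    ratPt n p q ∈ unitSphere n ∧
      ‖α - ratPt n p q‖ < Real.sqrt ((n:ℝ)+1) * φ (q:ℝ) := by
  set pr : Fin (n+1) → ℝ := fun i => (p i : ℝ) with hpr
  set Qr : ℝ := (q : ℝ) with hQr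
  have hQr0 : 0 < Qr := by rw [hQr]; exact_mod_cast hq
  set s : ℝ := Real.sqrt ((n:ℝ)+1) with hsdef
  have hs0 : 0 < s := Real.sqrt_pos.2 (by positivity)
  have hs2 : s ^ 2 = (n:ℝ) + 1 := Real.sq_sqrt (by positivity)
  have hφx₀ : 0 < φ x₀ := hφpos x₀ Set.self_mem_Ici
  set y : ℝ := 2 / (s * Real.exp t) with hy
  have het : 0 < Real.exp t := Real.exp_pos t
  have hy0 : 0 < y := by positivity
  have hyle : y ≤ φ x₀ := by
    have hc : (0:ℝ) < 2 / (s * φ x₀) := by positivity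
    have h1 : 2 / (s * φ x₀) ≤ Real.exp t := by
      calc 2 / (s * φ x₀) = Real.exp (Real.log (2 / (s * φ x₀))) := (Real.exp_log hc).symm
        _ ≤ Real.exp t := Real.exp_le_exp.2 htlog
    rw [hy, div_le_iff₀ (by positivity)]
    rw [div_le_iff₀ (by positivity)] at h1
    nlinarith
  obtain ⟨hxmem, hφx⟩ := hψmem y ⟨hy0, hyle⟩
  set x : ℝ := ψ y with hx
  have hxx₀ : x₀ ≤ x := hxmem
  have hxpos : 0 < x := by linarith
  set w0 : ℝ := rα.mulVec (Fin.snoc pr Qr) 0 with hw0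
  set δ : ℝ := Qr - w0 with hδ
  have hvec : vecPQ n p q = Fin.snoc pr Qr := rfl
  have hE : ∑ i, (pr i - Qr * α i)^2 = 2 * Qr * δ := by
    rw [E_eq hrG hrP hrα pr Qr hsum]
  have hEnn : 0 ≤ ∑ i, (pr i - Qr * α i)^2 :=
    Finset.sum_nonneg fun i _ => sq_nonneg _
  have hδ0 : 0 ≤ δ := by nlinarith
  set ρ : ℝ := Real.exp (-t) * x with hρ
  have hlast_le : |(gFlow n t * rα).mulVec (vecPQ n p q) (Fin.last (n+1))|
      ≤ ‖(gFlow n t * rα).mulVec (vecPQ n p q)‖ := by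
    simpa [Real.norm_eq_abs] using
      norm_le_pi_norm ((gFlow n t * rα).mulVec (vecPQ n p q)) (Fin.last (n+1))
  have hzero_le : |(gFlow n t * rα).mulVec (vecPQ n p q) 0|
      ≤ ‖(gFlow n t * rα).mulVec (vecPQ n p q)‖ := by
    simpa [Real.norm_eq_abs] using
      norm_le_pi_norm ((gFlow n t * rα).mulVec (vecPQ n p q)) 0
  have hlastlt : |(gFlow n t * rα).mulVec (vecPQ n p q) (Fin.last (n+1))| < ρ :=
    lt_of_le_of_lt hlast_le hnorm
  have hzerolt : |(gFlow n t * rα).mulVec (vecPQ n p q) 0| < ρ :=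
    lt_of_le_of_lt hzero_le hnorm
  rw [hvec, u_last hrP hrα pr Qr t, ← hw0, ← hδ] at hlastlt
  rw [hvec, u_zero hrP hrα pr Qr t, ← hw0, ← hδ] at hzerolt
  have hsinh : 0 ≤ Real.sinh t := sinh_nonneg' ht0
  have hent : 0 < Real.exp (-t) := Real.exp_pos _
  have hsum2 : ∑ i, pr i ^ 2 = Qr ^ 2 := hsum
  clear_value pr Qr s y x w0 δ ρ
  clear hnorm hlast_le hzero_le hsum
  have h1 : Qr * Real.exp (-t) + Real.sinh t * δ < ρ := by
    rwa [abs_of_nonneg (by positivity)] at hlastlt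
  have hqltx : Qr < x := by nlinarith
  have hinv : Real.exp (-t) * Real.exp t = 1 := by
    rw [← Real.exp_add]; simp
  have h2 : Real.exp t * δ < 2 * ρ := by
    have heq : Real.exp t * δ =
        (Qr * Real.exp (-t) + Real.sinh t * δ) - (Qr * Real.exp (-t) - Real.cosh t * δ) := by
      linear_combination -δ * (Real.cosh_add_sinh t)
    rw [heq]
    calc (Qr * Real.exp (-t) + Real.sinh t * δ) - (Qr * Real.exp (-t) - Real.cosh t * δ)
        ≤ |Qr * Real.exp (-t) + Real.sinh t * δ| + |Qr * Real.exp (-t) - Real.cosh t * δ| := by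
          have := le_abs_self (Qr * Real.exp (-t) + Real.sinh t * δ)
          have := neg_abs_le (Qr * Real.exp (-t) - Real.cosh t * δ)
          linarith
      _ < 2 * ρ := by linarith
  have hδlt : δ < 2 * ρ * Real.exp (-t) := by nlinarith
  have hexpφ : Real.exp (-t) = s * φ x / 2 := by
    rw [Real.exp_neg, hφx, hy]
    field_simp
  have hφQr : 0 < φ Qr := hφpos Qr hqx
  have hφxle : φ x ≤ φ Qr := le_of_lt (hφanti hqx hxmem hqltx)
  have hxφle : x * φ x ≤ Qr * φ Qr := hxφ Qr x hqx (le_of_lt hqltx)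
  have hφxpos : 0 < φ x := by rw [hφx]; exact hy0
  have hElt : ∑ i, (pr i - Qr * α i)^2 < ((n:ℝ)+1) * Qr^2 * φ Qr^2 := by
    have e0 : (2 * Qr) * δ < (2 * Qr) * (2 * ρ * Real.exp (-t)) :=
      mul_lt_mul_of_pos_left hδlt (by positivity)
    rw [hρ] at e0
    have e1 : ∑ i, (pr i - Qr * α i)^2 < 4 * Qr * x * (Real.exp (-t))^2 := by
      nlinarith [e0, hE]
    have e2 : 4 * Qr * x * (Real.exp (-t))^2 = ((n:ℝ)+1) * Qr * (x * φ x) * φ x := by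
      rw [hexpφ]
      linear_combination (Qr * x * φ x ^ 2) * hs2
    have e3' : (x * φ x) * φ x ≤ (Qr * φ Qr) * φ Qr :=
      mul_le_mul hxφle hφxle (le_of_lt hφxpos) (mul_nonneg (le_of_lt hQr0) (le_of_lt hφQr))
    have e3 : ((n:ℝ)+1) * Qr * (x * φ x) * φ x ≤ ((n:ℝ)+1) * Qr^2 * φ Qr^2 := by
      have e3'' := mul_le_mul_of_nonneg_left e3' (by positivity : (0:ℝ) ≤ ((n:ℝ)+1) * Qr)
      nlinarith [e3'']
    linarith
  constructor
  · show ∑ i, (ratPt n p q i)^2 = 1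
    have : ∀ i, (ratPt n p q i)^2 = pr i ^2 / Qr^2 := fun i => by
      simp [ratPt, div_pow, hpr, hQr]
    rw [Finset.sum_congr rfl fun i _ => this i, ← Finset.sum_div, hsum2]
    field_simp
  · have hpos : 0 < s * φ Qr := by positivity
    rw [pi_norm_lt_iff hpos]
    intro i
    have hterm : (pr i - Qr * α i)^2 ≤ ∑ j, (pr j - Qr * α j)^2 :=
      Finset.single_le_sum (f := fun j => (pr j - Qr * α j)^2) (fun j _ => sq_nonneg _)
        (Finset.mem_univ i)
    have hsq : (α i - ratPt n p q i)^2 < (s * φ Qr)^2 := by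
      have hr : α i - ratPt n p q i = -(pr i - Qr * α i) / Qr := by
        simp only [ratPt, hpr, hQr]
        field_simp
        ring
      rw [hr, div_pow, neg_pow]
      rw [div_lt_iff₀ (by positivity)]
      have : (s * φ Qr)^2 = ((n:ℝ)+1) * φ Qr^2 := by linear_combination (φ Qr^2) * hs2
      rw [this]
      calc (-1)^2 * (pr i - Qr * α i)^2 = (pr i - Qr * α i)^2 := by ring
        _ < ((n:ℝ)+1) * Qr^2 * φ Qr^2 := lt_of_le_of_lt hterm hElt
        _ = ((n:ℝ)+1) * φ Qr^2 * Qr^2 := by ring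
    have := Real.sqrt_lt_sqrt (sq_nonneg _) hsq
    rw [Real.sqrt_sq_eq_abs, Real.sqrt_sq (le_of_lt hpos)] at this
    simpa [Real.norm_eq_abs] using this

lemma rho_le_R (x₀ : ℝ) (hx₀ : 1 ≤ x₀) (φ ψ : ℝ → ℝ)
    (hφpos : ∀ x ∈ Set.Ici x₀, 0 < φ x)
    (hxφ : ∀ x y : ℝ, x₀ ≤ x → x ≤ y → y * φ y ≤ x * φ x)
    (hψmem : ∀ y ∈ Set.Ioc (0 : ℝ) (φ x₀), ψ y ∈ Set.Ici x₀ ∧ φ (ψ y) = y)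
    (t : ℝ) (htlog : Real.log (2 / (Real.sqrt ((n:ℝ)+1) * φ x₀)) ≤ t) :
    Real.exp (-t) * ψ (2 / (Real.sqrt ((n:ℝ)+1) * Real.exp t)) ≤
      Real.sqrt ((n:ℝ)+1) / 2 * (x₀ * φ x₀) := by
  set s : ℝ := Real.sqrt ((n:ℝ)+1) with hsdef
  have hs0 : 0 < s := Real.sqrt_pos.2 (by positivity)
  have hφx₀ : 0 < φ x₀ := hφpos x₀ Set.self_mem_Ici
  set y : ℝ := 2 / (s * Real.exp t) with hy
  have het : 0 < Real.exp t := Real.exp_pos t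
  have hy0 : 0 < y := by positivity
  have hyle : y ≤ φ x₀ := by
    have hc : (0:ℝ) < 2 / (s * φ x₀) := by positivity
    have h1 : 2 / (s * φ x₀) ≤ Real.exp t := by
      calc 2 / (s * φ x₀) = Real.exp (Real.log (2 / (s * φ x₀))) := (Real.exp_log hc).symm
        _ ≤ Real.exp t := Real.exp_le_exp.2 htlog
    rw [hy, div_le_iff₀ (by positivity)]
    rw [div_le_iff₀ (by positivity)] at h1
    nlinarith
  obtain ⟨hxmem, hφx⟩ := hψmem y ⟨hy0, hyle⟩
  have hexpφ : Real.exp (-t) = s * φ (ψ y) / 2 := by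
    rw [Real.exp_neg, hφx, hy]
    field_simp
  have hxφle : ψ y * φ (ψ y) ≤ x₀ * φ x₀ := hxφ x₀ (ψ y) (le_refl _) hxmem
  have hφxpos : 0 < φ (ψ y) := by rw [hφx]; exact hy0
  rw [hexpφ]
  have h2 : s / 2 * (ψ y * φ (ψ y)) ≤ s / 2 * (x₀ * φ x₀) :=
    mul_le_mul_of_nonneg_left hxφle (by positivity)
  clear_value s y
  nlinarith

lemma escape (hrG : isSOQ n rα) (hrP : preservesHyperplane n rα)
    (hrα : rα.mulVec (embedS n α) = eOne n)
    (p : Fin (n+1) → ℤ) (q : ℕ) (hq : 0 < q)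
    (hsum : ∑ i, ((p i : ℝ))^2 = (q:ℝ)^2)
    (hE : 0 < ∑ i, ((p i : ℝ) - (q:ℝ) * α i)^2) (R : ℝ) :
    ∀ᶠ t in Filter.atTop, R ≤ ‖(gFlow n t * rα).mulVec (vecPQ n p q)‖ := by
  set pr : Fin (n+1) → ℝ := fun i => (p i : ℝ) with hpr
  set Qr : ℝ := (q : ℝ) with hQr
  have hQr0 : 0 < Qr := by rw [hQr]; exact_mod_cast hq
  set δ : ℝ := Qr - rα.mulVec (Fin.snoc pr Qr) 0 with hδ
  have hEeq : ∑ i, (pr i - Qr * α i)^2 = 2 * Qr * δ := by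
    rw [E_eq hrG hrP hrα pr Qr hsum]
  have hδpos : 0 < δ := by nlinarith
  filter_upwards [Filter.eventually_ge_atTop (0:ℝ),
    Real.tendsto_exp_atTop.eventually_ge_atTop (2 * R / δ + 1)] with t ht0 hexp
  have hul : (gFlow n t * rα).mulVec (vecPQ n p q) (Fin.last (n+1))
      = Qr * Real.exp (-t) + Real.sinh t * δ := by
    have : vecPQ n p q = Fin.snoc pr Qr := rfl
    rw [this, u_last hrP hrα pr Qr t, ← hδ]
  have hent : (0:ℝ) < Real.exp (-t) := Real.exp_pos _
  have hexpneg : Real.exp (-t) ≤ 1 := by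
    rw [Real.exp_le_one_iff]; linarith
  have hδne : δ ≠ 0 := ne_of_gt hδpos
  have hRle : R ≤ Real.sinh t * δ := by
    have h3 : R / δ ≤ Real.sinh t := by
      rw [Real.sinh_eq]
      have h4 : 2 * R / δ = 2 * (R / δ) := by ring
      linarith
    have h5 := mul_le_mul_of_nonneg_right h3 (le_of_lt hδpos)
    rwa [div_mul_cancel₀ _ hδne] at h5
  calc R ≤ Real.sinh t * δ := hRle
    _ ≤ Qr * Real.exp (-t) + Real.sinh t * δ := by nlinarith
    _ ≤ |(gFlow n t * rα).mulVec (vecPQ n p q) (Fin.last (n+1))| := by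
        rw [hul]; exact le_abs_self _
    _ ≤ ‖(gFlow n t * rα).mulVec (vecPQ n p q)‖ := by
        simpa [Real.norm_eq_abs] using
          norm_le_pi_norm ((gFlow n t * rα).mulVec (vecPQ n p q)) (Fin.last (n+1))

end Quant

section Witness
variable {n : ℕ} {rα : Matrix (Fin (n+2)) (Fin (n+2)) ℝ}

lemma gFlow_mulVec_ne_zero (t : ℝ) {w : Fin (n+2) → ℝ} (hw : w ≠ 0) :
    (gFlow n t).mulVec w ≠ 0 := by
  intro h
  apply hw
  rw [gFlow_mulVec] at h
  have h0 := congrFun h 0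
  have hl := congrFun h (Fin.last (n+1))
  rw [if_pos rfl] at h0
  rw [if_neg (Ne.symm (zero_ne_last n)), if_pos rfl] at hl
  simp only [Pi.zero_apply] at h0 hl
  have hce := Real.cosh_sq_sub_sinh_sq t
  have hw0 : w 0 = 0 := by
    linear_combination Real.cosh t * h0 + Real.sinh t * hl - w 0 * hce
  have hwl : w (Fin.last (n+1)) = 0 := by
    linear_combination Real.sinh t * h0 + Real.cosh t * hl - w (Fin.last (n+1)) * hce
  funext i
  have hi := congrFun h i
  by_cases hi0 : i = 0
  · rw [hi0]; exact hw0
  · by_cases hil : i = Fin.last (n+1)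
    · rw [hil]; exact hwl
    · rw [if_neg hi0, if_neg hil] at hi
      exact hi

lemma eOne_mem_Lambda0 : eOne n ∈ Lambda0 n := by
  constructor
  · intro i
    by_cases h0 : i = 0
    · exact ⟨1, by simp [eOne, h0]⟩
    · by_cases hl : i = Fin.last (n+1)
      · exact ⟨1, by simp [eOne, h0, hl]⟩
      · exact ⟨0, by simp [eOne, h0, hl]⟩
  · unfold Qform
    have h1 : ∀ i : Fin (n+1), eOne n i.castSucc ^ 2 = (if i = 0 then 1 else 0) := by
      intro i; rw [eOne_castSucc]; by_cases h : i = 0 <;> simp [h]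
    rw [Finset.sum_congr rfl fun i _ => h1 i, Finset.sum_ite_eq' Finset.univ (0 : Fin (n+1))
      (fun _ => (1:ℝ)), eOne_last]
    simp

lemma eOne_ne_zero : (eOne n : Fin (n+2) → ℝ) ≠ 0 := by
  intro h
  have := congrFun h 0
  simp [eOne] at this

lemma exists_witness (hdet : rα.det = 1) (t ρ : ℝ)
    (h : omegaMin n (latticeOf n (gFlow n t * rα)) < ρ) :
    ∃ m : Fin (n+2) → ℝ, m ∈ Lambda0 n ∧ m ≠ 0 ∧
      ‖(gFlow n t * rα).mulVec m‖ < ρ := by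
  by_contra hcon
  push_neg at hcon
  apply not_le.2 h
  have : Invertible rα := rα.invertibleOfIsUnitDet (by rw [hdet]; exact isUnit_one)
  have hrinj : Function.Injective rα.mulVec := rα.mulVec_injective_of_invertible
  apply le_csInf
  · refine ⟨‖(gFlow n t * rα).mulVec (eOne n)‖, (gFlow n t * rα).mulVec (eOne n), ⟨⟨eOne n, eOne_mem_Lambda0, rfl⟩, ?_⟩, rfl⟩
    rw [← Matrix.mulVec_mulVec]
    apply gFlow_mulVec_ne_zero
    intro hz
    apply eOne_ne_zero (n := n)
    apply hrinj
    rw [hz, Matrix.mulVec_zero]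
  · rintro b ⟨v, ⟨⟨m, hm, rfl⟩, hvne⟩, rfl⟩
    refine hcon m hm ?_
    intro hz
    apply hvne
    rw [hz]
    simp

lemma int_vec {m : Fin (n+2) → ℝ} (hm : m ∈ Lambda0 n) (hne : m ≠ 0) :
    ∃ (p : Fin (n+1) → ℤ) (q : ℕ), 0 < q ∧ (∑ i, ((p i : ℝ))^2 = (q:ℝ)^2) ∧
      (vecPQ n p q = m ∨ vecPQ n p q = -m) := by
  choose M hM using hm.1
  have hQ : ∑ i : Fin (n+1), ((M i.castSucc : ℝ))^2 = ((M (Fin.last (n+1)) : ℝ))^2 := by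
    have h2 := hm.2
    unfold Qform at h2
    rw [Finset.sum_congr rfl fun i _ => by rw [hM i.castSucc], hM (Fin.last (n+1))] at h2
    linarith
  have hqne : M (Fin.last (n+1)) ≠ 0 := by
    intro h0
    apply hne
    have hz : ∀ i : Fin (n+1), (M i.castSucc : ℝ) = 0 := by
      have hsum0 : ∑ i : Fin (n+1), ((M i.castSucc : ℝ))^2 = 0 := by
        rw [hQ, h0]; simp
      intro i
      have := (Finset.sum_eq_zero_iff_of_nonneg (fun j _ => sq_nonneg _)).1 hsum0 i
        (Finset.mem_univ i)
      exact pow_eq_zero_iff (by norm_num) |>.1 this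
    funext i
    refine Fin.lastCases ?_ ?_ i
    · rw [hM (Fin.last (n+1)), h0]; simp
    · intro j; rw [hM j.castSucc, hz j]; simp
  rcases lt_or_gt_of_ne hqne with hneg | hpos
  · refine ⟨fun i => -M i.castSucc, (-(M (Fin.last (n+1)))).toNat, ?_, ?_, Or.inr ?_⟩
    · simp only [Int.lt_toNat]; push_cast; omega
    · have hcast : ((((-(M (Fin.last (n+1)))).toNat : ℤ)) : ℝ) = -(M (Fin.last (n+1)) : ℝ) := by
        rw [Int.toNat_of_nonneg (by omega)]; push_cast; ring
      push_cast
      rw [show (((-(M (Fin.last (n+1)))).toNat : ℕ) : ℝ) = -(M (Fin.last (n+1)) : ℝ) by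
        exact_mod_cast hcast]
      simpa using hQ
    · funext i
      refine Fin.lastCases ?_ ?_ i
      · rw [vecPQ, Fin.snoc_last, Pi.neg_apply, hM (Fin.last (n+1))]
        have : ((((-(M (Fin.last (n+1)))).toNat : ℤ)) : ℝ) = -(M (Fin.last (n+1)) : ℝ) := by
          rw [Int.toNat_of_nonneg (by omega)]; push_cast; ring
        exact_mod_cast this
      · intro j
        rw [vecPQ, Fin.snoc_castSucc, Pi.neg_apply, hM j.castSucc]
        push_cast; ring
  · refine ⟨fun i => M i.castSucc, (M (Fin.last (n+1))).toNat, ?_, ?_, Or.inl ?_⟩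
    · simp only [Int.lt_toNat]; push_cast; omega
    · have hcast : ((((M (Fin.last (n+1))).toNat : ℤ)) : ℝ) = (M (Fin.last (n+1)) : ℝ) := by
        rw [Int.toNat_of_nonneg (by omega)]
      push_cast
      rw [show ((((M (Fin.last (n+1))).toNat : ℕ) : ℝ)) = (M (Fin.last (n+1)) : ℝ) by
        exact_mod_cast hcast]
      exact hQ
    · funext i
      refine Fin.lastCases ?_ ?_ i
      · rw [vecPQ, Fin.snoc_last, hM (Fin.last (n+1))]
        have : ((((M (Fin.last (n+1))).toNat : ℤ)) : ℝ) = (M (Fin.last (n+1)) : ℝ) := by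
          rw [Int.toNat_of_nonneg (by omega)]
        exact_mod_cast this
      · intro j
        rw [vecPQ, Fin.snoc_castSucc, hM j.castSucc]

lemma sphere_sum {p : Fin (n+1) → ℤ} {q : ℕ} (hq : 0 < q)
    (h : ratPt n p q ∈ unitSphere n) : ∑ i, ((p i : ℝ))^2 = (q:ℝ)^2 := by
  have hq0 : ((q:ℝ))^2 ≠ 0 := by positivity
  have h' : (∑ i, ((p i:ℝ))^2) / (q:ℝ)^2 = 1 := by
    rw [Finset.sum_div]
    simpa [unitSphere, ratPt, div_pow] using h
  field_simp at h'
  exact h'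

end Witness


/-- The other direction of the correspondence (Theorem `dictionary`): if there is a
sequence `t_k → ∞` in `[t₀,∞)` with `ω(g_{t_k} r_α Λ₀) < ρ(t_k)`, where
`t₀ = ln(2/(√(n+1)φ(x₀)))` and `ρ(t) = e^{−t} φ⁻¹(2/(√(n+1)e^t))`, then `α` is
`√(n+1)·φ`-approximable in `Sⁿ` (with denominators `q ≥ x₀`). -/
theorem small_lattice_vectors_implies_approximable (n : ℕ) (hn : 1 ≤ n)
    (x₀ : ℝ) (hx₀ : 1 ≤ x₀) (φ ψ : ℝ → ℝ)
    (hφpos : ∀ x ∈ Set.Ici x₀, 0 < φ x)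
    (hφanti : StrictAntiOn φ (Set.Ici x₀))
    (hφcont : ContinuousOn φ (Set.Ici x₀))
    (hφlim : Filter.Tendsto φ Filter.atTop (nhds 0))
    (hxφ : ∀ x y : ℝ, x₀ ≤ x → x ≤ y → y * φ y ≤ x * φ x)
    -- `ψ = φ⁻¹` is the inverse function of `φ`, defined on `(0, φ(x₀)]`
    (hψmem : ∀ y ∈ Set.Ioc (0 : ℝ) (φ x₀), ψ y ∈ Set.Ici x₀ ∧ φ (ψ y) = y)
    (hψφ : ∀ x ∈ Set.Ici x₀, ψ (φ x) = x)
    (α : Fin (n + 1) → ℝ) (hα : α ∈ unitSphere n)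
    (rα : Matrix (Fin (n + 2)) (Fin (n + 2)) ℝ) (hrG : isSOQ n rα)
    (hrP : preservesHyperplane n rα) (hrα : rα.mulVec (embedS n α) = eOne n)
    (ts : ℕ → ℝ)
    (hts : ∀ k, Real.log (2 / (Real.sqrt ((n : ℝ) + 1) * φ x₀)) ≤ ts k)
    (htslim : Filter.Tendsto ts Filter.atTop Filter.atTop)
    (hsmall : ∀ k, omegaMin n (latticeOf n (gFlow n (ts k) * rα)) <
      Real.exp (-(ts k)) * ψ (2 / (Real.sqrt ((n : ℝ) + 1) * Real.exp (ts k)))) :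
    {pq : (Fin (n + 1) → ℤ) × ℕ | 0 < pq.2 ∧ x₀ ≤ (pq.2 : ℝ) ∧
      ratPt n pq.1 pq.2 ∈ unitSphere n ∧
      ‖α - ratPt n pq.1 pq.2‖ < Real.sqrt ((n : ℝ) + 1) * φ (pq.2 : ℝ)}.Infinite := by
  set S := {pq : (Fin (n + 1) → ℤ) × ℕ | 0 < pq.2 ∧ x₀ ≤ (pq.2 : ℝ) ∧
      ratPt n pq.1 pq.2 ∈ unitSphere n ∧
      ‖α - ratPt n pq.1 pq.2‖ < Real.sqrt ((n : ℝ) + 1) * φ (pq.2 : ℝ)} with hS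
  have hs0 : 0 < Real.sqrt ((n:ℝ)+1) := Real.sqrt_pos.2 (by positivity)
  by_cases hrat : ∃ (p : Fin (n+1) → ℤ) (q : ℕ), 0 < q ∧ ∀ i, (q:ℝ) * α i = (p i : ℝ)
  · -- rational case
    obtain ⟨p, q, hq, hpq⟩ := hrat
    set M₀ : ℕ := ⌈x₀⌉₊ + 1 with hM₀
    refine Set.infinite_of_injective_forall_mem
      (f := fun m : ℕ => ((fun i => ((m + M₀ : ℕ) : ℤ) * p i, (m + M₀) * q) :
        (Fin (n + 1) → ℤ) × ℕ)) ?_ ?_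
    · intro a b hab
      have h2 := congrArg Prod.snd hab
      simp only at h2
      have : a + M₀ = b + M₀ := Nat.eq_of_mul_eq_mul_right hq h2
      omega
    · intro m
      have hq2 : 0 < (m + M₀) * q := by positivity
      have hq2R : (0:ℝ) < ((m + M₀ : ℕ) : ℝ) := by positivity
      have hqR : (0:ℝ) < (q : ℝ) := by exact_mod_cast hq
      have hxle : x₀ ≤ (((m + M₀) * q : ℕ) : ℝ) := by
        calc x₀ ≤ (⌈x₀⌉₊ : ℝ) := Nat.le_ceil x₀
          _ ≤ (((m + M₀) * q : ℕ) : ℝ) := by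
            push_cast
            nlinarith [Nat.one_le_cast (α := ℝ) |>.2 hq,
              (show (M₀:ℝ) = ⌈x₀⌉₊ + 1 by rw [hM₀]; push_cast; ring), (Nat.cast_nonneg m : (0:ℝ) ≤ m)]
      have hratPt : ratPt n (fun i => ((m + M₀ : ℕ) : ℤ) * p i) ((m + M₀) * q) = α := by
        funext i
        rw [ratPt]
        have := hpq i
        push_cast
        field_simp
        rw [mul_div_cancel_left₀ _ (by positivity : (m:ℝ) + M₀ ≠ 0)]
        linarith [hpq i]
      refine ⟨hq2, hxle, ?_, ?_⟩
      · rw [hratPt]; exact hα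
      · rw [hratPt, sub_self, norm_zero]
        have := hφpos (((m + M₀) * q : ℕ) : ℝ) hxle
        positivity
  · -- irrational case
    have hirr : ∀ (p : Fin (n+1) → ℤ) (q : ℕ), 0 < q →
        0 < ∑ i, ((p i : ℝ) - (q:ℝ) * α i)^2 := by
      intro p q hq
      rcases (Finset.sum_nonneg (fun i _ => sq_nonneg ((p i : ℝ) - (q:ℝ) * α i))).lt_or_eq
        with h | h
      · exact h
      · exfalso
        apply hrat
        refine ⟨p, q, hq, fun i => ?_⟩
        have := (Finset.sum_eq_zero_iff_of_nonneg (fun j _ => sq_nonneg _)).1 h.symm i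
          (Finset.mem_univ i)
        have h0 : (p i : ℝ) - (q:ℝ) * α i = 0 := by
          exact pow_eq_zero_iff (by norm_num) |>.1 this
        linarith
    by_contra hfin
    rw [Set.not_infinite] at hfin
    -- the finite set of "bad" pairs
    set N : ℕ := ⌈x₀⌉₊ with hN
    have hsmallfin : {pq : (Fin (n+1) → ℤ) × ℕ | 0 < pq.2 ∧ (pq.2:ℝ) ≤ x₀ ∧
        ∑ i, ((pq.1 i : ℝ))^2 = (pq.2:ℝ)^2}.Finite := by
      apply Set.Finite.subset
        (((Set.Finite.pi (fun _ : Fin (n+1) => Set.finite_Icc (-(N:ℤ)) (N:ℤ))).prod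
          (Set.finite_Iic N)))
      rintro ⟨p, q⟩ ⟨hq0, hqle, hsum⟩
      have hqN : q ≤ N := by
        have : (q:ℝ) ≤ (N:ℝ) := le_trans hqle (Nat.le_ceil x₀)
        exact_mod_cast this
      rw [Set.mem_prod]
      refine ⟨Set.mem_univ_pi.2 fun i => ?_, hqN⟩
      have h1 : ((p i : ℝ))^2 ≤ ((q:ℝ))^2 := by
        rw [← hsum]
        exact Finset.single_le_sum (f := fun j => ((p j : ℝ))^2)
          (fun j _ => sq_nonneg _) (Finset.mem_univ i)
      have h2 : |(p i : ℝ)| ≤ (q : ℝ) := by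
        have := Real.sqrt_le_sqrt h1
        rwa [Real.sqrt_sq_eq_abs, Real.sqrt_sq (by positivity)] at this
      have h3 : |(p i : ℝ)| ≤ (N : ℝ) := le_trans h2 (by exact_mod_cast hqN)
      rw [Set.mem_Icc]
      constructor
      · have : -(N:ℝ) ≤ (p i : ℝ) := by
          have := neg_abs_le ((p i : ℝ)); linarith
        exact_mod_cast this
      · have : (p i : ℝ) ≤ (N:ℝ) := le_trans (le_abs_self _) h3
        exact_mod_cast this
    set bigSet := S ∪ {pq : (Fin (n+1) → ℤ) × ℕ | 0 < pq.2 ∧ (pq.2:ℝ) ≤ x₀ ∧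
        ∑ i, ((pq.1 i : ℝ))^2 = (pq.2:ℝ)^2} with hbigSet
    have hbigfin : bigSet.Finite := hfin.union hsmallfin
    set R : ℝ := Real.sqrt ((n:ℝ)+1) / 2 * (x₀ * φ x₀) with hR
    have hev : ∀ pq ∈ bigSet, ∀ᶠ t in Filter.atTop,
        R ≤ ‖(gFlow n t * rα).mulVec (vecPQ n pq.1 pq.2)‖ := by
      rintro ⟨p, q⟩ hpq
      have hq : 0 < q := by
        rcases hpq with h | h
        · exact h.1
        · exact h.1
      have hsum : ∑ i, ((p i : ℝ))^2 = (q:ℝ)^2 := by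
        rcases hpq with h | h
        · exact sphere_sum hq h.2.2.1
        · exact h.2.2
      exact escape hrG hrP hrα p q hq hsum (hirr p q hq) R
    have hev2 : ∀ᶠ t in Filter.atTop, (∀ pq ∈ bigSet,
        R ≤ ‖(gFlow n t * rα).mulVec (vecPQ n pq.1 pq.2)‖) ∧ 0 ≤ t :=
      (hbigfin.eventually_all.2 hev).and (Filter.eventually_ge_atTop 0)
    obtain ⟨k, hkall, hk0⟩ := (htslim.eventually hev2).exists
    obtain ⟨m, hmΛ, hmne, hmnorm⟩ := exists_witness hrG.1 (ts k) _ (hsmall k)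
    obtain ⟨p, q, hq, hsum, hcase⟩ := int_vec hmΛ hmne
    have hnorm' : ‖(gFlow n (ts k) * rα).mulVec (vecPQ n p q)‖ <
        Real.exp (-(ts k)) * ψ (2 / (Real.sqrt ((n : ℝ) + 1) * Real.exp (ts k))) := by
      rcases hcase with h | h
      · rw [h]; exact hmnorm
      · rw [h, Matrix.mulVec_neg, norm_neg]; exact hmnorm
    have hρR : Real.exp (-(ts k)) * ψ (2 / (Real.sqrt ((n : ℝ) + 1) * Real.exp (ts k))) ≤ R :=
      rho_le_R x₀ hx₀ φ ψ hφpos hxφ hψmem (ts k) (hts k)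
    have hnotbig : (p, q) ∉ bigSet := by
      intro hin
      have := hkall (p, q) hin
      linarith
    have hqx : x₀ ≤ (q:ℝ) := by
      by_contra hlt
      push_neg at hlt
      exact hnotbig (Or.inr ⟨hq, le_of_lt hlt, hsum⟩)
    obtain ⟨hsph, hnrm⟩ := key_forward x₀ hx₀ φ ψ hφpos hφanti hxφ hψmem hrG hrP hrα
      (ts k) hk0 (hts k) p q hq hqx hsum hnorm'
    exact hnotbig (Or.inl ⟨hq, hqx, hsph, hnrm⟩)
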